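/- Let a,b,c,e,f,g be real numbers with Δ = (ac−b²)(eg−f²) − (1/4)(ag+ce−2bf)² = 0 and K = (ac−b²)+(eg−f²) ≥ 0. Then the matrix [[a,b,c],[e,f,g]] has rank at most 1. -/

import Mathlib

/-- Rank of an outer product is at most 1. -/
lemma aux_rank_vecMulVec_le (w : Fin 2 → ℝ) (v : Fin 3 → ℝ) :
    (Matrix.vecMulVec w v).rank ≤ 1 := by
  rw [Matrix.vecMulVec_eq (Fin 1)]
  refine le_trans (Matrix.rank_mul_le_left _ _) ?_
  have := Matrix.rank_le_card_width (Matrix.replicateCol (Fin 1) w)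
  simp at this
  exact this

/-- Core scalar lemma: if the form (e,f,g) is definite (positive determinant),
(p,q,r) has vanishing determinant-like relation `p*r = q^2`, and the mixed
invariant vanishes, then p = q = r = 0. -/
lemma aux_core (e f g p q r : ℝ) (hQ : 0 < e * g - f ^ 2)
    (hpr : p * r = q ^ 2) (hmix : p * g + r * e - 2 * q * f = 0) :
    p = 0 ∧ q = 0 ∧ r = 0 := by
  have heg : 0 < e * g := by nlinarith [sq_nonneg f]
  have he : e ≠ 0 := by
    rintro rfl; simp at heg
  have hg : g ≠ 0 := by
    rintro rfl; simp at heg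
  have h1 : (p * g + r * e) ^ 2 = 4 * q ^ 2 * f ^ 2 := by
    linear_combination (p * g + r * e + 2 * q * f) * hmix
  have h2 : q ^ 2 * (e * g - f ^ 2) ≤ 0 := by
    nlinarith [sq_nonneg (p * g - r * e)]
  have hq : q = 0 := by
    by_contra h
    have hq2 : 0 < q ^ 2 := by positivity
    nlinarith [mul_pos hq2 hQ]
  subst hq
  have hre : (r * e) ^ 2 = 0 := by
    linear_combination (r * e) * hmix - e * g * hpr
  have hre' : r * e = 0 := by
    exact pow_eq_zero_iff (two_ne_zero) |>.mp hre
  have hr : r = 0 := by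
    rcases mul_eq_zero.mp hre' with h | h
    · exact h
    · exact absurd h he
  subst hr
  have hp : p = 0 := by
    have : p * g = 0 := by linarith [hmix]
    rcases mul_eq_zero.mp this with h | h
    · exact h
    · exact absurd h hg
  exact ⟨hp, rfl, rfl⟩

theorem delta_zero_K_nonneg_implies_inflection (a b c e f g : ℝ)
    (hΔ : (a*c - b^2) * (e*g - f^2) - (1/4) * (a*g + c*e - 2*b*f)^2 = 0)
    (hK : (a*c - b^2) + (e*g - f^2) ≥ 0) :
    Matrix.rank !![a, b, c; e, f, g] ≤ 1 := by
  -- Step 1: both determinants are nonnegative.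
  have hP0 : 0 ≤ a * c - b ^ 2 := by
    nlinarith [sq_nonneg (a*g + c*e - 2*b*f)]
  have hQ0 : 0 ≤ e * g - f ^ 2 := by
    nlinarith [sq_nonneg (a*g + c*e - 2*b*f)]
  -- Step 2: all 2x2 minors vanish.
  obtain ⟨h1, h2, h3⟩ : a * f = b * e ∧ a * g = c * e ∧ b * g = c * f := by
    rcases hQ0.lt_or_eq with hQ | hQ
    · -- second form definite
      obtain ⟨hp, hq, hr⟩ := aux_core e f g
        (2*(e*g - f^2)*a - (a*g + c*e - 2*b*f)*e)
        (2*(e*g - f^2)*b - (a*g + c*e - 2*b*f)*f)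
        (2*(e*g - f^2)*c - (a*g + c*e - 2*b*f)*g)
        hQ (by linear_combination 4*(e*g - f^2)*hΔ) (by ring)
      have h2Q : (2*(e*g - f^2)) ≠ 0 := by positivity
      refine ⟨?_, ?_, ?_⟩
      · apply mul_left_cancel₀ h2Q; linear_combination f * hp - e * hq
      · apply mul_left_cancel₀ h2Q; linear_combination g * hp - e * hr
      · apply mul_left_cancel₀ h2Q; linear_combination g * hq - f * hr
    · rcases hP0.lt_or_eq with hP | hP
      · -- first form definite
        obtain ⟨hp, hq, hr⟩ := aux_core a b c
          (2*(a*c - b^2)*e - (a*g + c*e - 2*b*f)*a)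
          (2*(a*c - b^2)*f - (a*g + c*e - 2*b*f)*b)
          (2*(a*c - b^2)*g - (a*g + c*e - 2*b*f)*c)
          hP (by linear_combination 4*(a*c - b^2)*hΔ) (by ring)
        have h2P : (2*(a*c - b^2)) ≠ 0 := by positivity
        refine ⟨?_, ?_, ?_⟩
        · apply mul_left_cancel₀ h2P; linear_combination a * hq - b * hp
        · apply mul_left_cancel₀ h2P; linear_combination a * hr - c * hp
        · apply mul_left_cancel₀ h2P; linear_combination b * hr - c * hq
      · -- both degenerate
        have hPe : a * c - b ^ 2 = 0 := hP.symm
        have hQe : e * g - f ^ 2 = 0 := hQ.symm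
        have hR2 : (a*g + c*e - 2*b*f) ^ 2 = 0 := by
          linear_combination (-4) * hΔ + 4 * (e*g - f^2) * hPe
        have hR : a*g + c*e - 2*b*f = 0 :=
          pow_eq_zero_iff (two_ne_zero) |>.mp hR2
        have hag2 : (a*g - c*e) ^ 2 = 0 := by
          linear_combination (a*g + c*e + 2*b*f) * hR - 4*f^2*hPe - 4*a*c*hQe
        have hag : a*g - c*e = 0 := pow_eq_zero_iff (two_ne_zero) |>.mp hag2
        have hbf : b*f - a*g = 0 := by linarith
        have hbf2 : b*f - c*e = 0 := by linarith
        have ha1 : (a*f - b*e) ^ 2 = 0 := by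
          linear_combination (-(e^2))*hPe + (-(a^2))*hQe + (-(a*e))*hag + (-2*a*e)*hbf
        have ha3 : (b*g - c*f) ^ 2 = 0 := by
          linear_combination (-(g^2))*hPe + (-(c^2))*hQe + (c*g)*hag + (-2*c*g)*hbf2
        have e1 := pow_eq_zero_iff (n := 2) (two_ne_zero) |>.mp ha1
        have e3 := pow_eq_zero_iff (n := 2) (two_ne_zero) |>.mp ha3
        exact ⟨by linarith, by linarith, by linarith⟩
  -- Step 3: the matrix is an outer product, hence rank ≤ 1.
  rcases eq_or_ne a 0 with ha | ha
  · rcases eq_or_ne b 0 with hb | hb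
    · rcases eq_or_ne c 0 with hc | hc
      · have : !![a, b, c; e, f, g] = Matrix.vecMulVec ![0, 1] ![e, f, g] := by
          subst ha hb hc
          ext i j
          fin_cases i <;> fin_cases j <;> simp [Matrix.vecMulVec]
        rw [this]; exact aux_rank_vecMulVec_le _ _
      · have : !![a, b, c; e, f, g] = Matrix.vecMulVec ![1, g/c] ![a, b, c] := by
          ext i j
          fin_cases i <;> fin_cases j <;>
            simp [Matrix.vecMulVec] <;> field_simp <;> linarith
        rw [this]; exact aux_rank_vecMulVec_le _ _
    · have : !![a, b, c; e, f, g] = Matrix.vecMulVec ![1, f/b] ![a, b, c] := by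
        ext i j
        fin_cases i <;> fin_cases j <;>
          simp [Matrix.vecMulVec] <;> field_simp <;> linarith
      rw [this]; exact aux_rank_vecMulVec_le _ _
  · have : !![a, b, c; e, f, g] = Matrix.vecMulVec ![1, e/a] ![a, b, c] := by
      ext i j
      fin_cases i <;> fin_cases j <;>
        simp [Matrix.vecMulVec] <;> field_simp <;> linarith
    rw [this]; exact aux_rank_vecMulVec_le _ _
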